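/- Let N ≥ 1 and let Ω ⊆ ℝ^N be a set such that P_a Ω = Ω for every a ≥ 0 and P̃_a Ω = Ω for every a ≤ 0. Then Ω is Steiner symmetric with respect to the hyperplane H_0 = {x : x₁ = 0}. -/

import Mathlib

open Set MeasureTheory

noncomputable section

/-- Reflection `σ_a` of `x` in the hyperplane `H_a = {x : x₁ = a}` in `ℝ^N`. -/
def reflH {N : ℕ} (hN : 0 < N) (a : ℝ) (x : Fin N → ℝ) : Fin N → ℝ :=
  Function.update x ⟨0, hN⟩ (2 * a - x ⟨0, hN⟩)

/-- Set polarization `P_a Ω`: equals `Ω ∩ σ_a(Ω)` on `Σ_a⁺ = {x₁ > a}`,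
`Ω ∪ σ_a(Ω)` on `Σ_a⁻ = {x₁ < a}`, and `Ω` on `H_a`. -/
def polSet {N : ℕ} (hN : 0 < N) (a : ℝ) (Ω : Set (Fin N → ℝ)) : Set (Fin N → ℝ) :=
  {x | if a < x ⟨0, hN⟩ then x ∈ Ω ∧ reflH hN a x ∈ Ω
       else if x ⟨0, hN⟩ < a then x ∈ Ω ∨ reflH hN a x ∈ Ω
       else x ∈ Ω}

/-- Set polarization `P̃_a Ω`: equals `Ω ∪ σ_a(Ω)` on `Σ_a⁺`,
`Ω ∩ σ_a(Ω)` on `Σ_a⁻`, and `Ω` on `H_a`. -/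
def polSetDual {N : ℕ} (hN : 0 < N) (a : ℝ) (Ω : Set (Fin N → ℝ)) : Set (Fin N → ℝ) :=
  {x | if a < x ⟨0, hN⟩ then x ∈ Ω ∨ reflH hN a x ∈ Ω
       else if x ⟨0, hN⟩ < a then x ∈ Ω ∧ reflH hN a x ∈ Ω
       else x ∈ Ω}

/-- Function polarization `P_a v`. -/
def polFun {N : ℕ} (hN : 0 < N) (a : ℝ) (v : (Fin N → ℝ) → ℝ) (x : Fin N → ℝ) : ℝ :=
  if a < x ⟨0, hN⟩ then min (v x) (v (reflH hN a x))
  else if x ⟨0, hN⟩ < a then max (v x) (v (reflH hN a x))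
  else v x

/-- `Ω` is Steiner symmetric with respect to the hyperplane `H_0 = {x : x₁ = 0}`:
for every `b ∈ Ω` and every `s` with `|s| ≤ |b₁|`, the point `(s, b₂, …, b_N)` is in `Ω`. -/
def SteinerSymmetric {N : ℕ} (hN : 0 < N) (Ω : Set (Fin N → ℝ)) : Prop :=
  ∀ b ∈ Ω, ∀ s : ℝ, |s| ≤ |b ⟨0, hN⟩| → Function.update b ⟨0, hN⟩ s ∈ Ω


/-- If `P_a Ω = Ω` for all `a ≥ 0` and `P̃_a Ω = Ω` for all `a ≤ 0`, then `Ω` is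
Steiner symmetric with respect to `H_0`. -/
theorem steinerSymmetric_of_polSet_eq_self {N : ℕ} (hN : 1 ≤ N) (Ω : Set (Fin N → ℝ))
    (h₁ : ∀ a : ℝ, 0 ≤ a → polSet hN a Ω = Ω)
    (h₂ : ∀ a : ℝ, a ≤ 0 → polSetDual hN a Ω = Ω) :
    SteinerSymmetric hN Ω := by
  intro b hb s hs
  set i : Fin N := ⟨0, hN⟩ with hi
  rcases eq_or_ne s (b i) with rfl | hne
  · simpa [Function.update_eq_self] using hb
  rcases le_or_gt 0 (b i) with ht | ht
  · rw [abs_of_nonneg ht] at hs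
    have hs' : s < b i := lt_of_le_of_ne (le_of_abs_le hs) hne
    have hsl : -(b i) ≤ s := neg_le_of_abs_le hs
    set a := (b i + s) / 2 with hadef
    have ha : 0 ≤ a := by rw [hadef]; linarith
    have hlt : a < b i := by rw [hadef]; linarith
    have hb' : b ∈ polSet hN a Ω := by rw [h₁ a ha]; exact hb
    have hmem : reflH hN a b ∈ Ω := by
      change (if a < b i then b ∈ Ω ∧ reflH hN a b ∈ Ω else if b i < a then b ∈ Ω ∨ reflH hN a b ∈ Ω else b ∈ Ω) at hb'
      rw [if_pos hlt] at hb'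
      exact hb'.2
    have heq : reflH hN a b = Function.update b i s := by
      unfold reflH
      congr 1
      rw [hadef]; ring
    rwa [heq] at hmem
  · rw [abs_of_neg ht] at hs
    have h1 : s ≤ -(b i) := le_of_abs_le hs
    have h2 : -(-(b i)) ≤ s := neg_le_of_abs_le hs
    have hs' : b i < s := lt_of_le_of_ne (by linarith) (Ne.symm hne)
    set a := (b i + s) / 2 with hadef
    have ha : a ≤ 0 := by rw [hadef]; linarith
    have hlt : b i < a := by rw [hadef]; linarith
    have hb' : b ∈ polSetDual hN a Ω := by rw [h₂ a ha]; exact hb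
    have hnot : ¬ a < b i := not_lt.mpr hlt.le
    have hmem : reflH hN a b ∈ Ω := by
      change (if a < b i then b ∈ Ω ∨ reflH hN a b ∈ Ω else if b i < a then b ∈ Ω ∧ reflH hN a b ∈ Ω else b ∈ Ω) at hb'
      rw [if_neg hnot, if_pos hlt] at hb'
      exact hb'.2
    have heq : reflH hN a b = Function.update b i s := by
      unfold reflH
      congr 1
      rw [hadef]; ring
    rwa [heq] at hmem
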